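/- (LIPO-1) Let U_I = {u_i(y,x) : i ∈ I} and V_J = {v_j(z,y) : j ∈ J} be families of strictly positive real-valued functions with x ∈ X, y ∈ R^{d_y}, z ∈ R^{d_z}. Assume: (a3) for any positive-measure Y ⊂ R^{d_y}, every finite subset of U_I is linearly independent on Y × X; (a4) there exists a positive-measure Y ⊂ R^{d_y} such that for every positive-measure Y' ⊂ Y and positive-measure Z ⊂ R^{d_z}, every finite subset of V_J is linearly independent on Z × Y'; (a5) for any β ∈ R^{d_y}, positive-measure Z ⊂ R^{d_z}, and finite J_0 ⊂ J, linear dependence of {v_j(·, β) : j ∈ J_0} on Z implies two of these functions are identical on all of R^{d_z}; (a6) each v_j(z,y) is continuous in y. Then for every positive-measure Z ⊂ R^{d_z}, the product family {v_j(z,y) u_i(y,x) : i ∈ I, j ∈ J} is linearly independent under finite mixtures on X × R^{d_y} × Z. -/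

import Mathlib

open MeasureTheory

/-- Linear independence (under finite mixtures) of a family of functions
restricted to a subset `S` of their domain. -/
def LinIndepOn {A E : Type*} (S : Set E) (F : A → E → ℝ) : Prop :=
  ∀ (n : ℕ) (a : Fin n → A), Function.Injective a →
    LinearIndependent ℝ (fun i : Fin n => S.restrict (F (a i)))

/-- **LIPO-1**: under positivity, linear independence of `U_I` on
every positive-measure set of the overlap variable (a3), linear independence of
`V_J` on `Z × Y'` for all positive-measure subsets `Y'` of some positive-measure
`Y` (a4), the "linear dependence implies repeated functions" dichotomy at fixed
overlap values (a5), and continuity in the overlap variable (a6), the product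
family `{v_j(z,y) u_i(y,x)}` is linearly independent under finite mixtures on
`X × ℝ^{d_y} × Z` for every positive-measure `Z`. -/
theorem stmt7 {I J X : Type*} {dy dz : ℕ}
    (u : I → (Fin dy → ℝ) → X → ℝ)
    (v : J → (Fin dz → ℝ) → (Fin dy → ℝ) → ℝ)
    (ha1u : ∀ i y x, 0 < u i y x)
    (ha1v : ∀ j z y, 0 < v j z y)
    (ha3 : ∀ Y : Set (Fin dy → ℝ), 0 < volume Y →
      LinIndepOn (Y ×ˢ (Set.univ : Set X)) (fun i (p : (Fin dy → ℝ) × X) => u i p.1 p.2))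
    (ha4 : ∃ Y : Set (Fin dy → ℝ), 0 < volume Y ∧ ∀ Y' ⊆ Y, 0 < volume Y' →
      ∀ Z : Set (Fin dz → ℝ), 0 < volume Z →
        LinIndepOn (Z ×ˢ Y') (fun j (p : (Fin dz → ℝ) × (Fin dy → ℝ)) => v j p.1 p.2))
    (ha5 : ∀ (β : Fin dy → ℝ) (Z : Set (Fin dz → ℝ)), 0 < volume Z →
      ∀ (n : ℕ) (a : Fin n → J), Function.Injective a →
        ¬ LinearIndependent ℝ (fun i : Fin n => Z.restrict (fun z => v (a i) z β)) →
        ∃ i i', i ≠ i' ∧ (fun z => v (a i) z β) = (fun z => v (a i') z β))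
    (ha6 : ∀ j z, Continuous fun y => v j z y) :
    ∀ Z : Set (Fin dz → ℝ), 0 < volume Z →
      LinIndepOn ((Set.univ : Set X) ×ˢ (Set.univ : Set (Fin dy → ℝ)) ×ˢ Z)
        (fun (ij : I × J) (p : X × (Fin dy → ℝ) × (Fin dz → ℝ)) =>
          v ij.2 p.2.2 p.2.1 * u ij.1 p.2.1 p.1) := by
  classical
  intro Z hZ n a hainj
  rw [Fintype.linearIndependent_iff]
  intro c hc
  obtain ⟨Y, hY, hYprop⟩ := ha4
  -- pointwise form of hc
  have hc' : ∀ (x : X) (y : Fin dy → ℝ), ∀ z ∈ Z,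
      (∑ k : Fin n, c k * (v (a k).2 z y * u (a k).1 y x)) = 0 := by
    intro x y z hz
    have h := congrFun hc ⟨(x, y, z), ⟨Set.mem_univ _, Set.mem_univ _, hz⟩⟩
    simpa [Finset.sum_apply, Pi.smul_apply, smul_eq_mul, Set.restrict] using h
  -- bad sets where two v's coincide
  set N : Fin n → Fin n → Set (Fin dy → ℝ) := fun k k' =>
    {β | (fun z => v (a k).2 z β) = (fun z => v (a k').2 z β)} with hN
  have hnull : ∀ k k', (a k).2 ≠ (a k').2 → volume (Y ∩ N k k') = 0 := by
    intro k k' hne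
    by_contra h0
    have hpos : 0 < volume (Y ∩ N k k') := pos_iff_ne_zero.mpr h0
    have inj2 : Function.Injective ![(a k).2, (a k').2] := by
      have h2 : ∀ i : Fin 2, i = 0 ∨ i = 1 := by decide
      intro i i' hii
      rcases h2 i with rfl | rfl <;> rcases h2 i' with rfl | rfl <;>
        simp only [Matrix.cons_val_zero, Matrix.cons_val_one, Matrix.head_cons] at hii <;>
        first | rfl | exact absurd hii hne | exact absurd hii.symm hne
    have hli := hYprop (Y ∩ N k k') Set.inter_subset_left hpos Z hZ 2
      ![(a k).2, (a k').2] inj2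
    have heq : (fun i : Fin 2 => (Z ×ˢ (Y ∩ N k k')).restrict
        (fun p => v (![(a k).2, (a k').2] i) p.1 p.2)) 0
        = (fun i : Fin 2 => (Z ×ˢ (Y ∩ N k k')).restrict
        (fun p => v (![(a k).2, (a k').2] i) p.1 p.2)) 1 := by
      funext ⟨p, hp⟩
      have hb : p.2 ∈ N k k' := hp.2.2
      simpa [Set.restrict] using congrFun hb p.1
    exact absurd (hli.injective heq) (by decide)
  set NN : Set (Fin dy → ℝ) :=
    ⋃ k, ⋃ k', ⋃ _h : (a k).2 ≠ (a k').2, N k k' with hNNdef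
  have hNN : volume (Y ∩ NN) = 0 := by
    rw [hNNdef, Set.inter_iUnion]
    refine measure_iUnion_null fun k => ?_
    rw [Set.inter_iUnion]
    refine measure_iUnion_null fun k' => ?_
    rw [Set.inter_iUnion]
    exact measure_iUnion_null fun h => hnull k k' h
  set Y2 : Set (Fin dy → ℝ) := Y \ NN with hY2def
  have hY2pos : 0 < volume Y2 := by
    by_contra h0
    have h0' : volume Y2 = 0 := by simpa using h0
    have hsub : Y ⊆ Y2 ∪ (Y ∩ NN) := by
      intro β hβ
      by_cases h : β ∈ NN
      · exact Or.inr ⟨hβ, h⟩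
      · exact Or.inl ⟨hβ, h⟩
    have : volume Y = 0 := by
      have h1 := (measure_mono (μ := volume) hsub).trans (measure_union_le _ _)
      rw [h0', hNN] at h1
      simpa using h1
    exact absurd this hY.ne'
  -- key middle claim
  have claim2 : ∀ β ∈ Y2, ∀ (x : X) (j : J),
      (∑ k ∈ Finset.univ.filter (fun k => (a k).2 = j), c k * u (a k).1 β x) = 0 := by
    intro β hβ x
    set t : Finset J := Finset.univ.image (fun k : Fin n => (a k).2) with ht
    have hg : LinearIndependent ℝ (fun j : ↥t => Z.restrict (fun z => v (↑j) z β)) := by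
      by_contra hdep
      set e := Fintype.equivFin ↥t with he
      have hcomp : ¬ LinearIndependent ℝ
          ((fun j : ↥t => Z.restrict (fun z => v (↑j) z β)) ∘ e.symm) := by
        rw [linearIndependent_equiv e.symm]; exact hdep
      obtain ⟨i, i', hii, hfeq⟩ := ha5 β Z hZ _ (fun i => (↑(e.symm i) : J))
        (fun i i' h => e.symm.injective (Subtype.coe_injective h)) hcomp
      obtain ⟨k, -, hk⟩ := Finset.mem_image.mp (e.symm i).2
      obtain ⟨k', -, hk'⟩ := Finset.mem_image.mp (e.symm i').2
      have hne : (a k).2 ≠ (a k').2 := by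
        rw [hk, hk']
        intro h
        exact hii (e.symm.injective (Subtype.coe_injective h))
      have hmem : β ∈ N k k' := by
        show (fun z => v (a k).2 z β) = (fun z => v (a k').2 z β)
        rw [hk, hk']; exact hfeq
      exact hβ.2 (Set.mem_iUnion.mpr ⟨k, Set.mem_iUnion.mpr ⟨k',
        Set.mem_iUnion.mpr ⟨hne, hmem⟩⟩⟩)
    intro j
    by_cases hjt : j ∈ t
    · have hsum : (∑ jj : ↥t,
          (∑ k ∈ Finset.univ.filter (fun k => (a k).2 = (↑jj : J)), c k * u (a k).1 β x)
            • Z.restrict (fun z => v (↑jj) z β)) = 0 := by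
        funext ⟨z, hz⟩
        simp only [Finset.sum_apply, Pi.smul_apply, Set.restrict_apply, smul_eq_mul,
          Pi.zero_apply, Set.restrict]
        have h1 : (∑ jj : ↥t,
            (∑ k ∈ Finset.univ.filter (fun k => (a k).2 = (↑jj : J)), c k * u (a k).1 β x)
              * v (↑jj) z β)
            = ∑ jj ∈ t,
            (∑ k ∈ Finset.univ.filter (fun k => (a k).2 = jj), c k * u (a k).1 β x)
              * v jj z β :=
          Finset.sum_coe_sort t (fun jj =>
            (∑ k ∈ Finset.univ.filter (fun k => (a k).2 = jj), c k * u (a k).1 β x)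
              * v jj z β)
        rw [h1]
        have h2 : ∀ jj ∈ t,
            (∑ k ∈ Finset.univ.filter (fun k => (a k).2 = jj), c k * u (a k).1 β x)
              * v jj z β
            = ∑ k ∈ Finset.univ.filter (fun k => (a k).2 = jj),
                c k * (v (a k).2 z β * u (a k).1 β x) := by
          intro jj _
          rw [Finset.sum_mul]
          refine Finset.sum_congr rfl fun k hk => ?_
          have : (a k).2 = jj := (Finset.mem_filter.mp hk).2
          rw [this]; ring
        rw [Finset.sum_congr rfl h2, ht]
        have h3 := Finset.sum_fiberwise_of_maps_to (s := (Finset.univ : Finset (Fin n)))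
          (t := Finset.image (fun k : Fin n => (a k).2) Finset.univ)
          (g := fun k : Fin n => (a k).2)
          (f := fun k : Fin n => c k * (v (a k).2 z β * u (a k).1 β x))
          (fun k _ => Finset.mem_image_of_mem _ (Finset.mem_univ k))
        rw [h3]
        exact hc' x β z hz
      exact Fintype.linearIndependent_iff.mp hg _ hsum ⟨j, hjt⟩
    · have hempty : Finset.univ.filter (fun k => (a k).2 = j) = ∅ := by
        ext k
        simp only [Finset.mem_filter, Finset.mem_univ, true_and, Finset.notMem_empty,
          iff_false]
        intro h
        exact hjt (h ▸ Finset.mem_image.mpr ⟨k, Finset.mem_univ k, rfl⟩)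
      rw [hempty, Finset.sum_empty]
  -- final step: apply (a3)
  intro k0
  set K : Finset (Fin n) := Finset.univ.filter (fun k => (a k).2 = (a k0).2) with hK
  have hk0K : k0 ∈ K := by simp [hK]
  set e := Fintype.equivFin ↥K with he
  have hfam_inj : Function.Injective (fun i : Fin (Fintype.card ↥K) => (a ↑(e.symm i)).1) := by
    intro i i' h
    have h2 : (a ↑(e.symm i)).2 = (a ↑(e.symm i')).2 := by
      have hi := (Finset.mem_filter.mp (e.symm i).2).2
      have hi' := (Finset.mem_filter.mp (e.symm i').2).2
      rw [hi, hi']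
    have : a ↑(e.symm i) = a ↑(e.symm i') := Prod.ext h h2
    exact e.symm.injective (Subtype.coe_injective (hainj this))
  have hli := ha3 Y2 hY2pos _ (fun i => (a ↑(e.symm i)).1) hfam_inj
  have hsum : (∑ i, c ↑(e.symm i) •
      (Y2 ×ˢ (Set.univ : Set X)).restrict (fun p => u (a ↑(e.symm i)).1 p.1 p.2)) = 0 := by
    funext ⟨⟨β, x⟩, hm⟩
    have hβ : β ∈ Y2 := hm.1
    simp only [Finset.sum_apply, Pi.smul_apply, Set.restrict_apply, smul_eq_mul,
      Pi.zero_apply, Set.restrict]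
    have h1 : (∑ i, c ↑(e.symm i) * u (a ↑(e.symm i)).1 β x)
        = ∑ kk : ↥K, c ↑kk * u (a ↑kk).1 β x :=
      Equiv.sum_comp e.symm (fun kk : ↥K => c ↑kk * u (a ↑kk).1 β x)
    rw [h1, Finset.sum_coe_sort K (fun k => c k * u (a k).1 β x)]
    exact claim2 β hβ x (a k0).2
  have hall := Fintype.linearIndependent_iff.mp hli (fun i => c ↑(e.symm i)) hsum
  have hfin := hall (e ⟨k0, hk0K⟩)
  simpa using hfin
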